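/- Let $1 < r \le 2$, $m \ge 3$, set $q = (mr')'$ (so $1/q = 1 - 1/(mr')$), and let $1 \le k \le m-2$. For decreasing sequences $z^{(i_1)}, \ldots, z^{(i_k)} \in \mathbb{C}^n$ (given via their decreasing rearrangements) and $1 \le t \le n$: $\sum_{t \le j_1 \le \cdots \le j_k \le n} z^{(i_1)*}_{j_1} \cdots z^{(i_k)*}_{j_k}\, j_k^{1/r - 1/q} \le \Big(\prod_{l=1}^{k}\big(\tfrac{mr'}{m-l-1} + \tfrac{1}{t}\big)\Big)\, t^{\frac{k+1}{q'} - \frac{1}{r'}} \prod_{l=1}^{k}\|z^{(i_l)}\|_{\ell_{q,\infty}}$. -/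
import Mathlib


open Finset
open scoped Classical


lemma sum_Icc_rpow_le (n a : ℕ) (ha : 1 ≤ a) {ε : ℝ} (hε : 0 < ε) :
    ∑ j ∈ Finset.Icc a n, (j : ℝ) ^ (-(1 + ε)) ≤ (1 / ε + 1 / (a : ℝ)) * (a : ℝ) ^ (-ε) := by
  have ha0 : (0 : ℝ) < a := by exact_mod_cast ha
  have haε : (0:ℝ) ≤ (a:ℝ) ^ (-ε) := Real.rpow_nonneg ha0.le _
  rcases le_or_gt a n with h | h
  · have hsplit : Finset.Icc a n = insert a (Finset.Icc (a+1) n) := by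
      ext x; simp only [Finset.mem_Icc, Finset.mem_insert]; omega
    rw [hsplit, Finset.sum_insert (by simp)]
    have h1 : ∑ j ∈ Finset.Icc (a+1) n, (j : ℝ) ^ (-(1+ε))
        = ∑ i ∈ Finset.Ico a n, ((i+1 : ℕ) : ℝ) ^ (-(1+ε)) := by
      apply Finset.sum_nbij' (fun j => j - 1) (fun i => i + 1)
      · intro x hx; simp only [Finset.mem_Icc] at hx; simp only [Finset.mem_Ico]; omega
      · intro x hx; simp only [Finset.mem_Ico] at hx; simp only [Finset.mem_Icc]; omega
      · intro x hx; simp only [Finset.mem_Icc] at hx; omega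
      · intro x hx; omega
      · intro x hx; simp only [Finset.mem_Icc] at hx
        congr 2; omega
    have hanti : AntitoneOn (fun x : ℝ => x ^ (-(1+ε))) (Set.Icc (a:ℝ) (n:ℝ)) := by
      intro x hx y hy hxy
      exact Real.rpow_le_rpow_of_nonpos (lt_of_lt_of_le ha0 hx.1) hxy (by linarith)
    have h2 := AntitoneOn.sum_le_integral_Ico h hanti
    have h3 : ∫ x in (a:ℝ)..(n:ℝ), x ^ (-(1+ε))
        = ((n:ℝ) ^ (-ε) - (a:ℝ) ^ (-ε)) / (-ε) := by
      rw [integral_rpow]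
      · norm_num
      · right
        constructor
        · intro hcon; rw [show -(1+ε) = -1 + -ε by ring] at hcon; nlinarith [hcon]
        · rw [Set.uIcc_of_le (by exact_mod_cast h)]
          intro hcon
          exact absurd hcon.1 (by linarith)
    have h4 : ((n:ℝ) ^ (-ε) - (a:ℝ) ^ (-ε)) / (-ε) ≤ (a:ℝ) ^ (-ε) / ε := by
      have hn : (0:ℝ) ≤ (n:ℝ)^(-ε) := Real.rpow_nonneg (Nat.cast_nonneg n) _
      rw [show ((n:ℝ)^(-ε) - (a:ℝ)^(-ε))/(-ε) = ((a:ℝ)^(-ε) - (n:ℝ)^(-ε))/ε by ring]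
      gcongr
      linarith
    have h5 : (a:ℝ) ^ (-(1+ε)) = (a:ℝ)^(-ε) / a := by
      rw [show -(1+ε) = -ε + -1 by ring, Real.rpow_add ha0, Real.rpow_neg_one]
      ring
    calc (a:ℝ) ^ (-(1+ε)) + ∑ j ∈ Finset.Icc (a+1) n, (j : ℝ) ^ (-(1+ε))
        ≤ (a:ℝ)^(-ε)/a + (a:ℝ)^(-ε)/ε := by
          rw [h5, h1]
          gcongr
          exact h2.trans (h3 ▸ h4)
      _ = (1/ε + 1/(a:ℝ)) * (a:ℝ)^(-ε) := by ring
  · rw [Finset.Icc_eq_empty (by omega)]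
    simp only [Finset.sum_empty]
    positivity


noncomputable def Hsum (g f : ℕ → ℝ) (n : ℕ) : ℕ → ℕ → ℝ
  | 0, a => f a
  | c+1, a => ∑ j ∈ Finset.Icc a n, g j * Hsum g f n c j

lemma fin_reindex (n a : ℕ) (ha : 1 ≤ a) (φ : ℕ → ℝ) :
    ∑ x ∈ Finset.univ.filter (fun x : Fin n => a ≤ (x : ℕ) + 1), φ ((x : ℕ) + 1)
      = ∑ j ∈ Finset.Icc a n, φ j := by
  refine Finset.sum_bij' (fun (x : Fin n) _ => (x : ℕ) + 1)
    (fun (b : ℕ) (hb : b ∈ Finset.Icc a n) => (⟨b - 1, by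
      simp only [Finset.mem_Icc] at hb; omega⟩ : Fin n)) ?_ ?_ ?_ ?_ ?_
  · intro x hx
    simp only [Finset.mem_filter, Finset.mem_univ, true_and] at hx
    simp only [Finset.mem_Icc]
    exact ⟨hx, by have := x.isLt; omega⟩
  · intro b hb
    simp only [Finset.mem_Icc] at hb
    simp only [Finset.mem_filter, Finset.mem_univ, true_and]
    show a ≤ b - 1 + 1
    omega
  · intro x hx
    apply Fin.ext
    simp
  · intro b hb
    simp only [Finset.mem_Icc] at hb
    simp only [Fin.val_mk]
    omega
  · intro x hx
    rfl

lemma tuple_sum_eq (g f : ℕ → ℝ) (n : ℕ) (c : ℕ) :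
    ∀ (a : ℕ), 1 ≤ a →
    ∑ J ∈ Finset.univ.filter (fun J : Fin (c+1) → Fin n =>
        (∀ i j : Fin (c+1), i ≤ j → J i ≤ J j) ∧ ∀ i, a ≤ (J i : ℕ) + 1),
      (∏ i, g ((J i : ℕ) + 1)) * f ((J (Fin.last c) : ℕ) + 1)
    = Hsum g f n (c+1) a := by
  induction c with
  | zero =>
    intro a ha
    show _ = ∑ j ∈ Finset.Icc a n, g j * Hsum g f n 0 j
    simp only [Hsum]
    refine Finset.sum_bij' (fun (J : Fin 1 → Fin n) _ => (J 0 : ℕ) + 1)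
      (fun (b : ℕ) (hb : b ∈ Finset.Icc a n) =>
        (fun _ : Fin 1 => (⟨b - 1, by simp only [Finset.mem_Icc] at hb; omega⟩ : Fin n)))
      ?_ ?_ ?_ ?_ ?_
    · intro J hJ
      simp only [Finset.mem_filter, Finset.mem_univ, true_and] at hJ
      simp only [Finset.mem_Icc]
      exact ⟨hJ.2 0, by have := (J 0).isLt; omega⟩
    · intro b hb
      simp only [Finset.mem_Icc] at hb
      simp only [Finset.mem_filter, Finset.mem_univ, true_and]
      refine ⟨fun i j _ => le_refl _, fun i => show a ≤ b - 1 + 1 by omega⟩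
    · intro J hJ
      funext i
      have : i = 0 := Subsingleton.elim i 0
      subst this
      apply Fin.ext
      simp
    · intro b hb
      simp only [Finset.mem_Icc] at hb
      simp only [Fin.val_mk]
      omega
    · intro J hJ
      rw [Fin.prod_univ_one]
      rfl
  | succ c ih =>
    intro a ha
    have key : ∀ x : Fin n, a ≤ (x : ℕ) + 1 →
        ∑ J ∈ (Finset.univ.filter (fun J : Fin (c+2) → Fin n =>
            (∀ i j : Fin (c+2), i ≤ j → J i ≤ J j) ∧ ∀ i, a ≤ (J i : ℕ) + 1)).filter
            (fun J => J 0 = x),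
          (∏ i, g ((J i : ℕ) + 1)) * f ((J (Fin.last (c+1)) : ℕ) + 1)
        = g ((x : ℕ) + 1) * Hsum g f n (c+1) ((x : ℕ) + 1) := by
      intro x hx
      rw [← ih ((x : ℕ) + 1) (by omega), Finset.mul_sum]
      refine Finset.sum_bij' (fun (J : Fin (c+2) → Fin n) _ => Fin.tail J)
        (fun (K : Fin (c+1) → Fin n) _ => Fin.cons x K) ?_ ?_ ?_ ?_ ?_
      · intro J hJ
        simp only [Finset.mem_filter, Finset.mem_univ, true_and] at hJ
        obtain ⟨⟨hmono, hbd⟩, h0⟩ := hJ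
        simp only [Finset.mem_filter, Finset.mem_univ, true_and]
        constructor
        · intro i j hij
          exact hmono i.succ j.succ (Fin.succ_le_succ_iff.mpr hij)
        · intro i
          have h1 := hmono 0 i.succ (Fin.zero_le _)
          rw [h0] at h1
          have h2 : (x : ℕ) ≤ (J i.succ : ℕ) := h1
          show (x : ℕ) + 1 ≤ (J i.succ : ℕ) + 1
          omega
      · intro K hK
        simp only [Finset.mem_filter, Finset.mem_univ, true_and] at hK
        obtain ⟨hmono, hbd⟩ := hK
        simp only [Finset.mem_filter, Finset.mem_univ, true_and]
        refine ⟨⟨?_, ?_⟩, rfl⟩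
        · intro i j hij
          induction i using Fin.cases with
          | zero =>
            induction j using Fin.cases with
            | zero => exact le_refl _
            | succ j' =>
              simp only [Fin.cons_zero, Fin.cons_succ]
              have := hbd j'
              exact Fin.le_def.mpr (by omega)
          | succ i' =>
            induction j using Fin.cases with
            | zero =>
              exfalso
              have h3 := Fin.le_def.mp hij
              simp at h3
            | succ j' =>
              simp only [Fin.cons_succ]
              exact hmono i' j' (Fin.succ_le_succ_iff.mp hij)
        · intro i
          induction i using Fin.cases with
          | zero => simpa using hx
          | succ i' =>
            simp only [Fin.cons_succ]
            have := hbd i'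
            omega
      · intro J hJ
        simp only [Finset.mem_filter] at hJ
        have h4 := Fin.cons_self_tail (α := fun _ => Fin n) J
        rw [hJ.2] at h4
        exact h4
      · intro K hK
        simp
      · intro J hJ
        simp only [Finset.mem_filter] at hJ
        rw [Fin.prod_univ_succ]
        have hlast : J (Fin.last (c+1)) = Fin.tail J (Fin.last c) := by
          rw [← Fin.succ_last]
          rfl
        rw [hlast, hJ.2]
        simp only [Fin.tail]
        ring
    have key0 : ∀ x : Fin n, ¬ (a ≤ (x : ℕ) + 1) →
        ∑ J ∈ (Finset.univ.filter (fun J : Fin (c+2) → Fin n =>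
            (∀ i j : Fin (c+2), i ≤ j → J i ≤ J j) ∧ ∀ i, a ≤ (J i : ℕ) + 1)).filter
            (fun J => J 0 = x),
          (∏ i, g ((J i : ℕ) + 1)) * f ((J (Fin.last (c+1)) : ℕ) + 1) = 0 := by
      intro x hx
      apply Finset.sum_eq_zero
      intro J hJ
      exfalso
      simp only [Finset.mem_filter, Finset.mem_univ, true_and] at hJ
      apply hx
      rw [← hJ.2]
      exact hJ.1.2 0
    show _ = ∑ j ∈ Finset.Icc a n, g j * Hsum g f n (c+1) j
    rw [← Finset.sum_fiberwise (Finset.univ.filter (fun J : Fin (c+2) → Fin n =>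
      (∀ i j : Fin (c+2), i ≤ j → J i ≤ J j) ∧ ∀ i, a ≤ (J i : ℕ) + 1))
      (fun J => J 0)
      (fun J => (∏ i, g ((J i : ℕ) + 1)) * f ((J (Fin.last (c+1)) : ℕ) + 1))]
    rw [← fin_reindex n a ha (fun j => g j * Hsum g f n (c+1) j)]
    rw [Finset.sum_filter]
    apply Finset.sum_congr rfl
    intro x _
    by_cases hx : a ≤ (x : ℕ) + 1
    · rw [if_pos hx, key x hx]
    · rw [if_neg hx, key0 x hx]

lemma Hsum_bound (r r' q : ℝ) (m n t : ℕ) (hr : 1 < r) (hr2 : r ≤ 2) (hm : 3 ≤ m)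
    (hconj : 1 / r + 1 / r' = 1) (hq : 1 / q = 1 - 1 / ((m : ℝ) * r')) (ht1 : 1 ≤ t) :
    ∀ c : ℕ, c + 1 ≤ m - 2 → ∀ a : ℕ, t ≤ a →
    Hsum (fun j => (j : ℝ) ^ (-(1 / q))) (fun j => (j : ℝ) ^ (1 / r - 1 / q)) n (c + 1) a
      ≤ (∏ l ∈ Finset.Icc 1 (c + 1), ((m : ℝ) * r' / ((m : ℝ) - (l : ℝ) - 1) + 1 / (t : ℝ)))
        * (a : ℝ) ^ (-(((m : ℝ) - (c : ℝ) - 2) / ((m : ℝ) * r'))) := by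
  -- basic facts
  have hr0 : (0 : ℝ) < r := by linarith
  have hir : 1 / r ≥ 1 / 2 := by
    rw [ge_iff_le, div_le_div_iff₀ (by norm_num) hr0]; linarith
  have hir' : 0 < 1 / r' := by linarith [one_div_pos.mpr hr0, (by rw [div_lt_one hr0]; linarith : 1 / r < 1)]
  have hr'0 : (0 : ℝ) < r' := one_div_pos.mp hir'
  have h12 : 1 / r' ≤ 1 / 2 := by linarith
  have hinv : r' * (1 / r') = 1 := by field_simp
  have hr'2 : 2 ≤ r' := by
    have := mul_le_mul_of_nonneg_left h12 hr'0.le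
    linarith
  have hm0 : (0 : ℝ) < m := by positivity
  have hmr' : (0 : ℝ) < (m : ℝ) * r' := by positivity
  have hB : (m : ℝ) * (1 / ((m : ℝ) * r')) = 1 / r' := by
    field_simp
  intro c
  induction c with
  | zero =>
    intro hc a ha
    have ht0 : (0 : ℝ) < t := by exact_mod_cast ht1
    have ha1 : 1 ≤ a := le_trans ht1 ha
    have hε : (0 : ℝ) < ((m : ℝ) - 2) / ((m : ℝ) * r') := by
      apply div_pos _ hmr'
      have : (3 : ℝ) ≤ m := by exact_mod_cast hm
      linarith
    have hexp : ∀ j : ℕ, 1 ≤ j →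
        (j : ℝ) ^ (-(1 / q)) * (j : ℝ) ^ (1 / r - 1 / q)
          = (j : ℝ) ^ (-(1 + ((m : ℝ) - 2) / ((m : ℝ) * r'))) := by
      intro j hj
      have hj0 : (0 : ℝ) < j := by exact_mod_cast hj
      rw [← Real.rpow_add hj0]
      congr 1
      have hr1 : 1 / r = 1 - 1 / r' := by linarith
      rw [hq, hr1, ← hB]
      ring
    show (∑ j ∈ Finset.Icc a n, (j : ℝ) ^ (-(1/q)) * Hsum _ _ n 0 j) ≤ _
    simp only [Hsum]
    calc ∑ j ∈ Finset.Icc a n, (j : ℝ) ^ (-(1/q)) * (j : ℝ) ^ (1 / r - 1 / q)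
        = ∑ j ∈ Finset.Icc a n, (j : ℝ) ^ (-(1 + ((m : ℝ) - 2) / ((m : ℝ) * r'))) := by
          apply Finset.sum_congr rfl
          intro j hj
          simp only [Finset.mem_Icc] at hj
          exact hexp j (by omega)
      _ ≤ (1 / (((m : ℝ) - 2) / ((m : ℝ) * r')) + 1 / (a : ℝ)) *
            (a : ℝ) ^ (-(((m : ℝ) - 2) / ((m : ℝ) * r'))) :=
          sum_Icc_rpow_le n a ha1 hε
      _ ≤ ((m : ℝ) * r' / ((m : ℝ) - 2) + 1 / (t : ℝ)) *
            (a : ℝ) ^ (-(((m : ℝ) - 2) / ((m : ℝ) * r'))) := by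
          apply mul_le_mul_of_nonneg_right _ (Real.rpow_nonneg (by positivity) _)
          rw [one_div_div]
          have : 1 / (a : ℝ) ≤ 1 / (t : ℝ) := by
            apply one_div_le_one_div_of_le ht0
            exact_mod_cast ha
          linarith
      _ = _ := by
          rw [show (0 : ℕ) + 1 = 1 from rfl, Finset.Icc_self, Finset.prod_singleton]
          push_cast
          rw [show ((m:ℝ) - 1 - 1) = (m:ℝ) - 2 by ring,
            show -(((m:ℝ) - 0 - 2) / ((m:ℝ) * r')) = -(((m:ℝ) - 2) / ((m:ℝ) * r')) by ring]
  | succ c ih =>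
    intro hc a ha
    have ht0 : (0 : ℝ) < t := by exact_mod_cast ht1
    have ha1 : 1 ≤ a := le_trans ht1 ha
    have hmc : (c : ℝ) + 4 ≤ (m : ℝ) := by
      have : c + 4 ≤ m := by omega
      exact_mod_cast this
    have hε : (0 : ℝ) < ((m : ℝ) - (c : ℝ) - 3) / ((m : ℝ) * r') := by
      apply div_pos _ hmr'
      linarith
    have hC : (0 : ℝ) ≤ ∏ l ∈ Finset.Icc 1 (c + 1),
        ((m : ℝ) * r' / ((m : ℝ) - (l : ℝ) - 1) + 1 / (t : ℝ)) := by
      apply Finset.prod_nonneg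
      intro l hl
      simp only [Finset.mem_Icc] at hl
      have hl' : (l : ℝ) ≤ c + 1 := by exact_mod_cast hl.2
      have : (0 : ℝ) < (m : ℝ) - (l : ℝ) - 1 := by linarith
      positivity
    set C := ∏ l ∈ Finset.Icc 1 (c + 1), ((m : ℝ) * r' / ((m : ℝ) - (l : ℝ) - 1) + 1 / (t : ℝ))
      with hCdef
    show (∑ j ∈ Finset.Icc a n, (j : ℝ) ^ (-(1/q)) * Hsum _ _ n (c + 1) j) ≤ _
    have step1 : (∑ j ∈ Finset.Icc a n, (j : ℝ) ^ (-(1/q)) * Hsum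
          (fun j => (j : ℝ) ^ (-(1 / q))) (fun j => (j : ℝ) ^ (1 / r - 1 / q)) n (c + 1) j)
        ≤ ∑ j ∈ Finset.Icc a n,
            C * (j : ℝ) ^ (-(1 + ((m : ℝ) - (c : ℝ) - 3) / ((m : ℝ) * r'))) := by
      apply Finset.sum_le_sum
      intro j hj
      simp only [Finset.mem_Icc] at hj
      have hj1 : 1 ≤ j := by omega
      have hj0 : (0 : ℝ) < j := by exact_mod_cast hj1
      have h1 : Hsum (fun j => (j : ℝ) ^ (-(1 / q))) (fun j => (j : ℝ) ^ (1 / r - 1 / q)) n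
          (c + 1) j ≤ C * (j : ℝ) ^ (-(((m : ℝ) - (c : ℝ) - 2) / ((m : ℝ) * r'))) :=
        ih (by omega) j (le_trans ha hj.1)
      calc (j : ℝ) ^ (-(1/q)) * Hsum _ _ n (c + 1) j
          ≤ (j : ℝ) ^ (-(1/q)) * (C * (j : ℝ) ^ (-(((m : ℝ) - (c : ℝ) - 2) / ((m : ℝ) * r')))) :=
            mul_le_mul_of_nonneg_left h1 (Real.rpow_nonneg hj0.le _)
        _ = C * ((j : ℝ) ^ (-(1/q)) * (j : ℝ) ^ (-(((m : ℝ) - (c : ℝ) - 2) / ((m : ℝ) * r')))) := by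
            ring
        _ = C * (j : ℝ) ^ (-(1 + ((m : ℝ) - (c : ℝ) - 3) / ((m : ℝ) * r'))) := by
            rw [← Real.rpow_add hj0]
            congr 1
            rw [hq]
            ring
    calc (∑ j ∈ Finset.Icc a n, (j : ℝ) ^ (-(1/q)) * Hsum _ _ n (c + 1) j)
        ≤ ∑ j ∈ Finset.Icc a n,
            C * (j : ℝ) ^ (-(1 + ((m : ℝ) - (c : ℝ) - 3) / ((m : ℝ) * r'))) := step1
      _ = C * ∑ j ∈ Finset.Icc a n,
            (j : ℝ) ^ (-(1 + ((m : ℝ) - (c : ℝ) - 3) / ((m : ℝ) * r'))) := by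
          rw [Finset.mul_sum]
      _ ≤ C * ((1 / (((m : ℝ) - (c : ℝ) - 3) / ((m : ℝ) * r')) + 1 / (a : ℝ)) *
            (a : ℝ) ^ (-(((m : ℝ) - (c : ℝ) - 3) / ((m : ℝ) * r')))) :=
          mul_le_mul_of_nonneg_left (sum_Icc_rpow_le n a ha1 hε) hC
      _ ≤ C * (((m : ℝ) * r' / ((m : ℝ) - (c : ℝ) - 3) + 1 / (t : ℝ)) *
            (a : ℝ) ^ (-(((m : ℝ) - (c : ℝ) - 3) / ((m : ℝ) * r')))) := by
          apply mul_le_mul_of_nonneg_left _ hC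
          apply mul_le_mul_of_nonneg_right _ (Real.rpow_nonneg (by positivity) _)
          rw [one_div_div]
          have : 1 / (a : ℝ) ≤ 1 / (t : ℝ) := by
            apply one_div_le_one_div_of_le ht0
            exact_mod_cast ha
          linarith
      _ = _ := by
          rw [Finset.prod_Icc_succ_top (by omega : 1 ≤ c + 1 + 1), ← hCdef]
          push_cast
          rw [show -(((m : ℝ) - ((c : ℝ) + 1) - 2) / ((m : ℝ) * r'))
              = -(((m : ℝ) - (c : ℝ) - 3) / ((m : ℝ) * r')) by ring]
          rw [show (m : ℝ) - ((c : ℝ) + 1 + 1) - 1 = (m : ℝ) - (c : ℝ) - 3 by ring]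
          ring



open Finset
open scoped Classical

/-- Lemma 4.9 ("segundos"): for `1 < r ≤ 2`, `m ≥ 3`, `q = (mr')'`, `1 ≤ k ≤ m-2`,
decreasing non-negative vectors `w i` (the decreasing rearrangements `z^{(i_l)*}`) and `1 ≤ t ≤ n`:
`∑_{t ≤ j_1 ≤ ⋯ ≤ j_k ≤ n} w_1(j_1) ⋯ w_k(j_k) j_k^{1/r - 1/q}
  ≤ (∏_{l=1}^k (mr'/(m-l-1) + 1/t)) t^{(k+1)/q' - 1/r'} ∏_l ‖w_l‖_{q,∞}`,
where `‖w‖_{q,∞} = max_l l^{1/q} w_l` (indices 0-indexed via `+1`). -/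
theorem tail_monotone_tuple_sum_bound (r r' q q' : ℝ) (m n k t : ℕ)
    (hr : 1 < r) (hr2 : r ≤ 2) (hm : 3 ≤ m)
    (hconj : 1 / r + 1 / r' = 1) (hq : 1 / q = 1 - 1 / ((m : ℝ) * r'))
    (hq' : 1 / q + 1 / q' = 1)
    (hk1 : 1 ≤ k) (hk2 : k ≤ m - 2) (ht1 : 1 ≤ t) (ht2 : t ≤ n)
    (w : Fin k → Fin n → ℝ)
    (hw0 : ∀ i l, 0 ≤ w i l)
    (hwa : ∀ i, ∀ l l' : Fin n, l ≤ l' → w i l' ≤ w i l) :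
    ∑ J ∈ Finset.univ.filter (fun J : Fin k → Fin n =>
        (∀ a b : Fin k, a ≤ b → J a ≤ J b) ∧ ∀ i : Fin k, t ≤ (J i : ℕ) + 1),
      (∏ i : Fin k, w i (J i)) *
        (((J (⟨k - 1, by omega⟩ : Fin k) : ℕ) + 1 : ℝ)) ^ (1 / r - 1 / q) ≤
    (∏ l ∈ Finset.Icc 1 k, ((m : ℝ) * r' / ((m : ℝ) - (l : ℝ) - 1) + 1 / (t : ℝ))) *
      (t : ℝ) ^ (((k : ℝ) + 1) / q' - 1 / r') *
      ∏ i : Fin k, ⨆ l : Fin n, ((l : ℕ) + 1 : ℝ) ^ (1 / q) * w i l := by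
  -- basic real facts
  have hr0 : (0 : ℝ) < r := by linarith
  have hir' : 0 < 1 / r' := by
    have h1 : 1 / r < 1 := by rw [div_lt_one hr0]; linarith
    linarith
  have hr'0 : (0 : ℝ) < r' := one_div_pos.mp hir'
  have hm0 : (0 : ℝ) < m := by positivity
  have hmr' : (0 : ℝ) < (m : ℝ) * r' := by positivity
  have hB : (m : ℝ) * (1 / ((m : ℝ) * r')) = 1 / r' := by field_simp
  obtain ⟨c, rfl⟩ : ∃ c, k = c + 1 := ⟨k - 1, by omega⟩
  have hn1 : 1 ≤ n := le_trans ht1 ht2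
  haveI : Nonempty (Fin n) := ⟨⟨0, by omega⟩⟩
  set M : Fin (c + 1) → ℝ := fun i => ⨆ l : Fin n, ((l : ℕ) + 1 : ℝ) ^ (1 / q) * w i l with hM
  have hMle : ∀ i (l : Fin n), ((l : ℕ) + 1 : ℝ) ^ (1 / q) * w i l ≤ M i := by
    intro i l
    exact le_ciSup (f := fun l : Fin n => ((l : ℕ) + 1 : ℝ) ^ (1 / q) * w i l)
      (Set.Finite.bddAbove (Set.finite_range _)) l
  have hM0 : ∀ i, 0 ≤ M i := by
    intro i
    refine le_trans ?_ (hMle i ⟨0, by omega⟩)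
    have := hw0 i ⟨0, by omega⟩
    positivity
  have hwle : ∀ i (l : Fin n), w i l ≤ M i * (((l : ℕ) + 1 : ℝ)) ^ (-(1 / q)) := by
    intro i l
    have hpos : (0 : ℝ) < ((l : ℕ) + 1 : ℝ) := by positivity
    have h1 := hMle i l
    have h2 : (0 : ℝ) ≤ (((l : ℕ) + 1 : ℝ)) ^ (-(1 / q)) := Real.rpow_nonneg hpos.le _
    calc w i l = (((l : ℕ) + 1 : ℝ) ^ (1 / q) * w i l) * (((l : ℕ) + 1 : ℝ)) ^ (-(1 / q)) := by
          rw [mul_comm, ← mul_assoc, ← Real.rpow_add hpos]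
          simp
      _ ≤ M i * (((l : ℕ) + 1 : ℝ)) ^ (-(1 / q)) := mul_le_mul_of_nonneg_right h1 h2
  have key1 : ∑ J ∈ Finset.univ.filter (fun J : Fin (c + 1) → Fin n =>
        (∀ a b : Fin (c + 1), a ≤ b → J a ≤ J b) ∧ ∀ i : Fin (c + 1), t ≤ (J i : ℕ) + 1),
      (∏ i : Fin (c + 1), w i (J i)) *
        (((J (Fin.last c) : ℕ) + 1 : ℝ)) ^ (1 / r - 1 / q)
      ≤ (∏ i : Fin (c + 1), M i) *
          Hsum (fun j => (j : ℝ) ^ (-(1 / q))) (fun j => (j : ℝ) ^ (1 / r - 1 / q)) n (c + 1) t := by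
    rw [← tuple_sum_eq (fun j => (j : ℝ) ^ (-(1 / q))) (fun j => (j : ℝ) ^ (1 / r - 1 / q))
      n c t ht1, Finset.mul_sum]
    apply Finset.sum_le_sum
    intro J hJ
    have hlastpos : (0 : ℝ) ≤ (((J (Fin.last c) : ℕ) + 1 : ℝ))
        ^ (1 / r - 1 / q) := Real.rpow_nonneg (by positivity) _
    calc (∏ i : Fin (c + 1), w i (J i)) *
          (((J (Fin.last c) : ℕ) + 1 : ℝ)) ^ (1 / r - 1 / q)
        ≤ (∏ i : Fin (c + 1), (M i * (((J i : ℕ) + 1 : ℝ)) ^ (-(1 / q)))) *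
          (((J (Fin.last c) : ℕ) + 1 : ℝ)) ^ (1 / r - 1 / q) := by
          apply mul_le_mul_of_nonneg_right _ hlastpos
          exact Finset.prod_le_prod (fun i _ => hw0 i (J i)) (fun i _ => hwle i (J i))
      _ = (∏ i : Fin (c + 1), M i) *
          ((∏ i : Fin (c + 1), ((((J i : ℕ) + 1 : ℕ)) : ℝ) ^ (-(1 / q))) *
            ((((J (Fin.last c) : ℕ) + 1 : ℕ)) : ℝ) ^ (1 / r - 1 / q)) := by
          rw [Finset.prod_mul_distrib]
          push_cast
          rw [mul_assoc]
  have key2 := Hsum_bound r r' q m n t hr hr2 hm hconj hq ht1 c (by omega) t (le_refl t)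
  have hexp_eq : (((c + 1 : ℕ) : ℝ) + 1) / q' - 1 / r'
      = -(((m : ℝ) - (c : ℝ) - 2) / ((m : ℝ) * r')) := by
    have h1q' : 1 / q' = 1 / ((m : ℝ) * r') := by linarith
    have h2 : (((c + 1 : ℕ) : ℝ) + 1) / q' = (((c + 1 : ℕ) : ℝ) + 1) * (1 / q') := by ring
    rw [h2, h1q', ← hB]
    push_cast
    ring
  have hprodM : 0 ≤ ∏ i : Fin (c + 1), M i := Finset.prod_nonneg (fun i _ => hM0 i)
  calc ∑ J ∈ Finset.univ.filter (fun J : Fin (c + 1) → Fin n =>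
        (∀ a b : Fin (c + 1), a ≤ b → J a ≤ J b) ∧ ∀ i : Fin (c + 1), t ≤ (J i : ℕ) + 1),
      (∏ i : Fin (c + 1), w i (J i)) *
        (((J (Fin.last c) : ℕ) + 1 : ℝ)) ^ (1 / r - 1 / q)
      ≤ (∏ i : Fin (c + 1), M i) *
          Hsum (fun j => (j : ℝ) ^ (-(1 / q))) (fun j => (j : ℝ) ^ (1 / r - 1 / q)) n (c + 1) t :=
        key1
    _ ≤ (∏ i : Fin (c + 1), M i) *
          ((∏ l ∈ Finset.Icc 1 (c + 1), ((m : ℝ) * r' / ((m : ℝ) - (l : ℝ) - 1) + 1 / (t : ℝ)))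
            * (t : ℝ) ^ (-(((m : ℝ) - (c : ℝ) - 2) / ((m : ℝ) * r')))) :=
        mul_le_mul_of_nonneg_left key2 hprodM
    _ = (∏ l ∈ Finset.Icc 1 (c + 1), ((m : ℝ) * r' / ((m : ℝ) - (l : ℝ) - 1) + 1 / (t : ℝ))) *
        (t : ℝ) ^ ((((c + 1 : ℕ) : ℝ) + 1) / q' - 1 / r') *
        ∏ i : Fin (c + 1), M i := by
        rw [hexp_eq]
        ring
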